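/- Let ν > 0, s > 0, let φ̂ ∈ ℝ be such that sin(φ̂) ≠ 0 (so cot(φ̂) is defined), let c ≠ 0, and let F : (0,∞) → ℝ be the UTD transition function F(x) = 2√x · √( (√(2π)/4 − ∫₀^{√x} cos(y²) dy)² + (√(2π)/4 − ∫₀^{√x} sin(y²) dy)² ). Then the UTD diffraction term D(k) := −(ν/(2√(2πks))) · cot(φ̂) · F(2ks·c²) tends to 0 as k → ∞. -/

import Mathlib

open Real

/-- The Kouyoumjian–Pathak (UTD) transition function, expressed via Fresnel integrals:
`F(x) = 2√x · √( (√(2π)/4 − ∫₀^{√x} cos(y²) dy)² + (√(2π)/4 − ∫₀^{√x} sin(y²) dy)² )`. -/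
noncomputable def utdTransition (x : ℝ) : ℝ :=
  2 * Real.sqrt x *
    Real.sqrt ((Real.sqrt (2 * π) / 4 - ∫ y in (0 : ℝ)..Real.sqrt x, Real.cos (y ^ 2)) ^ 2 +
      (Real.sqrt (2 * π) / 4 - ∫ y in (0 : ℝ)..Real.sqrt x, Real.sin (y ^ 2)) ^ 2)

section FresnelDevelopment

open Complex MeasureTheory Filter Set intervalIntegral

/-! ### Auxiliary development: Fresnel integrals -/

lemma deriv_aux {c : ℂ} (hc : c ≠ 0) {y : ℝ} (hy : y ≠ 0) :
    HasDerivAt (fun t : ℝ => Complex.exp (c * t ^ 2) / (2 * c * t))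
      (Complex.exp (c * y ^ 2) - Complex.exp (c * y ^ 2) / (2 * c * y ^ 2)) y := by
  have hz : (y : ℂ) ≠ 0 := Complex.ofReal_ne_zero.mpr hy
  have h1 : HasDerivAt (fun z : ℂ => Complex.exp (c * z ^ 2) / (2 * c * z))
      (Complex.exp (c * y ^ 2) - Complex.exp (c * y ^ 2) / (2 * c * (y:ℂ) ^ 2)) (y : ℂ) := by
    have he : HasDerivAt (fun z : ℂ => Complex.exp (c * z ^ 2))
        (Complex.exp (c * y ^ 2) * (c * (2 * y))) (y : ℂ) := by
      have hp : HasDerivAt (fun z : ℂ => c * z ^ 2) (c * (2 * y)) (y : ℂ) := by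
        simpa using ((hasDerivAt_pow 2 (y:ℂ)).const_mul c)
      simpa using hp.cexp
    have hd : HasDerivAt (fun z : ℂ => 2 * c * z) (2 * c) (y : ℂ) := by
      simpa using (hasDerivAt_id (y:ℂ)).const_mul (2 * c)
    have := he.div hd (by simp [hc, hz])
    refine this.congr_deriv ?_
    field_simp
  simpa using h1.comp_ofReal

lemma cont_exp (c : ℂ) : Continuous (fun t : ℝ => Complex.exp (c * t ^ 2)) := by
  fun_prop

lemma contOn_tail {c : ℂ} (hc : c ≠ 0) :
    ContinuousOn (fun t : ℝ => Complex.exp (c * t ^ 2) / (2 * c * t ^ 2)) {x : ℝ | x ≠ 0} := by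
  apply ContinuousOn.div ((cont_exp c).continuousOn)
  · fun_prop
  · intro x hx
    simp only [mem_setOf_eq] at hx
    have : (x:ℂ) ≠ 0 := Complex.ofReal_ne_zero.mpr hx
    simp [hc, this]

lemma ibp {c : ℂ} (hc : c ≠ 0) {T : ℝ} (hT : 1 ≤ T) :
    ∫ y in (1:ℝ)..T, Complex.exp (c * y ^ 2)
      = Complex.exp (c * T ^ 2) / (2 * c * T) - Complex.exp c / (2 * c)
        + ∫ y in (1:ℝ)..T, Complex.exp (c * y ^ 2) / (2 * c * y ^ 2) := by
  have hsub : Set.uIcc (1:ℝ) T ⊆ {x : ℝ | x ≠ 0} := by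
    intro x hx
    have := (Set.uIcc_of_le hT ▸ hx).1
    simp only [mem_setOf_eq]; linarith
  have hint2 : IntervalIntegrable (fun y : ℝ => Complex.exp (c * y ^ 2) / (2 * c * y ^ 2))
      volume 1 T := ((contOn_tail hc).mono hsub).intervalIntegrable
  have hint1 : IntervalIntegrable (fun y : ℝ => Complex.exp (c * y ^ 2)) volume 1 T :=
    (cont_exp c).intervalIntegrable _ _
  have key := intervalIntegral.integral_eq_sub_of_hasDerivAt
    (f := fun t : ℝ => Complex.exp (c * t ^ 2) / (2 * c * t))
    (f' := fun y : ℝ => Complex.exp (c * y ^ 2) - Complex.exp (c * y ^ 2) / (2 * c * y ^ 2))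
    (fun y hy => deriv_aux hc (hsub hy)) (hint1.sub hint2)
  rw [intervalIntegral.integral_sub hint1 hint2] at key
  rw [sub_eq_iff_eq_add] at key
  rw [key]
  norm_num

lemma tail_meas {c : ℂ} (hc : c ≠ 0) :
    AEStronglyMeasurable (fun y : ℝ => Complex.exp (c * y ^ 2) / (2 * c * y ^ 2))
      (volume.restrict (Ioi (1:ℝ))) := by
  apply ContinuousOn.aestronglyMeasurable _ measurableSet_Ioi
  apply (contOn_tail hc).mono
  intro x hx
  have : (1:ℝ) < x := hx
  simp only [mem_setOf_eq]
  linarith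

lemma tail_norm_le {c : ℂ} (hre : c.re ≤ 0) (hn : 1 ≤ ‖c‖) {y : ℝ} (hy : 1 < y) :
    ‖Complex.exp (c * y ^ 2) / (2 * c * y ^ 2)‖ ≤ (1:ℝ)/2 * y ^ (-2:ℝ) := by
  have hy0 : (0:ℝ) < y := by linarith
  rw [norm_div, Complex.norm_exp]
  have h1 : (c * (y:ℂ) ^ 2).re = c.re * y ^ 2 := by
    simp [Complex.mul_re, ← Complex.ofReal_pow]
  have h2 : Real.exp ((c * (y:ℂ) ^ 2).re) ≤ 1 := by
    rw [h1]
    apply Real.exp_le_one_iff.mpr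
    nlinarith
  have h3 : ‖2 * c * (y:ℂ) ^ 2‖ = 2 * ‖c‖ * y ^ 2 := by
    rw [norm_mul, norm_mul]
    simp [abs_of_pos hy0, ← Complex.ofReal_pow,
      abs_of_pos (by positivity : (0:ℝ) < y ^ 2)]
  rw [h3]
  have h4 : 2 * y ^ 2 ≤ 2 * ‖c‖ * y ^ 2 := by nlinarith
  have h5 : (1:ℝ)/2 * y ^ (-2:ℝ) = 1 / (2 * y ^ 2) := by
    rw [Real.rpow_neg hy0.le]
    rw [show ((2:ℝ):ℝ) = ((2:ℕ):ℝ) by norm_num, Real.rpow_natCast]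
    field_simp
  rw [h5]
  exact div_le_div₀ one_pos.le h2 (by positivity) h4

lemma bound_integrable : IntegrableOn (fun y : ℝ => (1:ℝ)/2 * y ^ (-2:ℝ)) (Ioi (1:ℝ)) :=
  (integrableOn_Ioi_rpow_of_lt (by norm_num) one_pos).const_mul _

lemma tail_integrable {c : ℂ} (hre : c.re ≤ 0) (hn : 1 ≤ ‖c‖) :
    IntegrableOn (fun y : ℝ => Complex.exp (c * y ^ 2) / (2 * c * y ^ 2)) (Ioi (1:ℝ)) := by
  have hc : c ≠ 0 := by intro h; rw [h] at hn; simp at hn; linarith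
  apply Integrable.mono bound_integrable (tail_meas hc)
  filter_upwards [ae_restrict_mem measurableSet_Ioi] with y hy
  have hy1 : (1:ℝ) < y := hy
  have hy0 : (0:ℝ) < y := by linarith
  calc ‖Complex.exp (c * y ^ 2) / (2 * c * y ^ 2)‖
      ≤ (1:ℝ)/2 * y ^ (-2:ℝ) := tail_norm_le hre hn hy1
    _ = ‖(1:ℝ)/2 * y ^ (-2:ℝ)‖ := by
        rw [Real.norm_eq_abs, abs_of_pos (by positivity)]

noncomputable def tailInt (c : ℂ) : ℂ :=
  ∫ y in Ioi (1:ℝ), Complex.exp (c * y ^ 2) / (2 * c * y ^ 2)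

lemma tendsto_ibp {c : ℂ} (hre : c.re ≤ 0) (hn : 1 ≤ ‖c‖) :
    Tendsto (fun T : ℝ => ∫ y in (1:ℝ)..T, Complex.exp (c * y ^ 2)) atTop
      (nhds (-(Complex.exp c / (2 * c)) + tailInt c)) := by
  have hc : c ≠ 0 := by intro h; rw [h] at hn; simp at hn; linarith
  have hb : Tendsto (fun T : ℝ => Complex.exp (c * T ^ 2) / (2 * c * T)) atTop (nhds 0) := by
    apply squeeze_zero_norm' (a := fun T : ℝ => 1 / (2 * T))
    · filter_upwards [eventually_ge_atTop (1:ℝ)] with T hT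
      have hT0 : (0:ℝ) < T := by linarith
      rw [norm_div, Complex.norm_exp]
      have h1 : (c * (T:ℂ) ^ 2).re = c.re * T ^ 2 := by
        simp [Complex.mul_re, ← Complex.ofReal_pow]
      have h2 : Real.exp ((c * (T:ℂ) ^ 2).re) ≤ 1 := by
        rw [h1]; apply Real.exp_le_one_iff.mpr; nlinarith
      have h3 : ‖2 * c * (T:ℂ)‖ = 2 * ‖c‖ * T := by
        rw [norm_mul, norm_mul]
        simp [abs_of_pos hT0]
      rw [h3]
      have h4 : 2 * T ≤ 2 * ‖c‖ * T := by nlinarith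
      exact div_le_div₀ one_pos.le h2 (by positivity) h4
    · exact tendsto_const_nhds.div_atTop (Filter.tendsto_id.const_mul_atTop two_pos)
  have ht : Tendsto (fun T : ℝ => ∫ y in (1:ℝ)..T, Complex.exp (c * y ^ 2) / (2 * c * y ^ 2))
      atTop (nhds (tailInt c)) :=
    intervalIntegral_tendsto_integral_Ioi 1 (tail_integrable hre hn) tendsto_id
  have h := (hb.sub (tendsto_const_nhds (x := Complex.exp c / (2*c)))).add ht
  rw [zero_sub] at h
  apply h.congr'
  filter_upwards [eventually_ge_atTop (1:ℝ)] with T hT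
  exact (ibp hc hT).symm

lemma c_props (ε : ℝ) (hε : 0 ≤ ε) :
    (I - (ε:ℂ)).re ≤ 0 ∧ 1 ≤ ‖I - (ε:ℂ)‖ := by
  constructor
  · simp [hε]
  · rw [Complex.norm_def, Complex.normSq_apply]
    simp only [Complex.sub_re, Complex.I_re, Complex.ofReal_re, Complex.sub_im, Complex.I_im,
      Complex.ofReal_im]
    rw [show (0 - ε) * (0 - ε) + (1 - 0) * (1 - 0) = ε^2 + 1 by ring]
    have h := Real.sqrt_le_sqrt (show (1:ℝ) ≤ ε^2+1 by nlinarith)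
    simpa using h

lemma gauss_eq {ε : ℝ} (hε : 0 < ε) :
    ((π : ℂ) / ((ε:ℂ) - I)) ^ (1/2 : ℂ) / 2
      = (∫ y in (0:ℝ)..1, Complex.exp ((I - ε) * y ^ 2))
        - Complex.exp (I - ε) / (2 * (I - ε)) + tailInt (I - ε) := by
  set c : ℂ := I - ε with hcdef
  obtain ⟨hre, hn⟩ := c_props ε hε.le
  have hb : (0:ℝ) < ((ε:ℂ) - I).re := by simpa using hε
  have hgauss := integral_gaussian_complex_Ioi hb
  have hneg : ∀ x : ℝ, -((ε:ℂ) - I) * (x:ℂ) ^ 2 = c * x ^ 2 := by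
    intro x; rw [hcdef]; ring
  have hint : Integrable (fun x : ℝ => Complex.exp (c * x ^ 2)) := by
    have := integrable_cexp_neg_mul_sq hb
    exact this.congr (Eventually.of_forall fun x => by simp only []; rw [hneg x])
  have hsplit : ∫ x : ℝ in Ioi 0, Complex.exp (c * x ^ 2)
      = (∫ x : ℝ in Ioc 0 1, Complex.exp (c * x ^ 2))
        + ∫ x : ℝ in Ioi 1, Complex.exp (c * x ^ 2) := by
    rw [← setIntegral_union]
    · rw [Ioc_union_Ioi_eq_Ioi (by norm_num : (0:ℝ) ≤ 1)]
    · rw [Set.disjoint_iff]; rintro x ⟨h1, h2⟩; exact absurd (mem_Ioi.mp h2) (not_lt.mpr h1.2)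
    · exact measurableSet_Ioi
    · exact hint.integrableOn
    · exact hint.integrableOn
  have htail : ∫ x : ℝ in Ioi 1, Complex.exp (c * x ^ 2)
      = -(Complex.exp c / (2 * c)) + tailInt c := by
    have h1 : Tendsto (fun T : ℝ => ∫ y in (1:ℝ)..T, Complex.exp (c * y ^ 2)) atTop
        (nhds (∫ x : ℝ in Ioi 1, Complex.exp (c * x ^ 2))) :=
      intervalIntegral_tendsto_integral_Ioi 1 hint.integrableOn tendsto_id
    exact tendsto_nhds_unique h1 (tendsto_ibp hre hn)
  have hIoc : ∫ x : ℝ in Ioc 0 1, Complex.exp (c * x ^ 2)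
      = ∫ y in (0:ℝ)..1, Complex.exp (c * y ^ 2) := by
    rw [intervalIntegral.integral_of_le (by norm_num : (0:ℝ) ≤ 1)]
  have : ∫ x : ℝ in Ioi 0, Complex.exp (c * x ^ 2) = ((π : ℂ) / ((ε:ℂ) - I)) ^ (1/2 : ℂ) / 2 := by
    rw [← hgauss]
    exact setIntegral_congr_fun measurableSet_Ioi fun x _ => by rw [hneg x]
  rw [this, hIoc, htail] at hsplit
  rw [hsplit]
  ring

noncomputable def fresnelL : ℂ :=
  (∫ y in (0:ℝ)..1, Complex.exp (I * y ^ 2)) - Complex.exp I / (2 * I) + tailInt I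

lemma fresnelL_eq : fresnelL = ((π : ℂ) * I) ^ (1/2 : ℂ) / 2 := by
  set εn : ℕ → ℝ := fun n => 1 / (n + 1) with hεn
  have hεpos : ∀ n, 0 < εn n := fun n => by positivity
  set cn : ℕ → ℂ := fun n => I - (εn n : ℂ) with hcn
  have hcnI : Tendsto cn atTop (nhds I) := by
    have h0 : Tendsto (fun n : ℕ => ((εn n : ℝ) : ℂ)) atTop (nhds 0) := by
      rw [show ((0:ℂ)) = ((0:ℝ):ℂ) by norm_num]
      exact (Complex.continuous_ofReal.tendsto 0).comp tendsto_one_div_add_atTop_nhds_zero_nat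
    simpa using tendsto_const_nhds.sub h0
  have hcn0 : ∀ n, cn n ≠ 0 := by
    intro n h
    have := congrArg Complex.im h
    simp [hcn] at this
  have hLHS : Tendsto (fun n => ((π : ℂ) / ((εn n : ℂ) - I)) ^ (1/2 : ℂ) / 2) atTop
      (nhds (((π : ℂ) * I) ^ (1/2 : ℂ) / 2)) := by
    have hbase : Tendsto (fun n => (π : ℂ) / ((εn n : ℂ) - I)) atTop (nhds ((π : ℂ) * I)) := by
      have hden : Tendsto (fun n => ((εn n : ℂ) - I)) atTop (nhds (-I)) := by
        have h0 : Tendsto (fun n : ℕ => ((εn n : ℝ) : ℂ)) atTop (nhds 0) := by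
          rw [show ((0:ℂ)) = ((0:ℝ):ℂ) by norm_num]
          exact (Complex.continuous_ofReal.tendsto 0).comp tendsto_one_div_add_atTop_nhds_zero_nat
        simpa using h0.sub (tendsto_const_nhds (x := I))
      have := tendsto_const_nhds (x := (π : ℂ)) |>.div hden (by simp [Complex.ext_iff])
      convert this using 2
      · rfl
      rw [div_neg, div_I]
      ring
    have hcpow : ContinuousAt (fun z : ℂ => z ^ (1/2 : ℂ)) ((π : ℂ) * I) := by
      apply continuousAt_cpow_const
      rw [Complex.mem_slitPlane_iff]
      right
      simp [Real.pi_ne_zero]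
    exact ((hcpow.tendsto.comp hbase).div_const 2)
  have hfirst : Tendsto (fun n => ∫ y in (0:ℝ)..1, Complex.exp (cn n * y ^ 2)) atTop
      (nhds (∫ y in (0:ℝ)..1, Complex.exp (I * y ^ 2))) := by
    apply intervalIntegral.tendsto_integral_filter_of_dominated_convergence (bound := fun _ => 1)
    · exact Eventually.of_forall fun n => ((Complex.continuous_exp.comp
        (by fun_prop : Continuous fun y : ℝ => cn n * (y:ℂ) ^ 2)).aestronglyMeasurable).restrict
    · apply Eventually.of_forall
      intro n
      apply Eventually.of_forall
      intro y hy
      rw [Complex.norm_exp]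
      apply Real.exp_le_one_iff.mpr
      have h1 : (cn n * (y:ℂ) ^ 2).re = -(εn n) * y ^ 2 := by
        simp [hcn, Complex.mul_re, Complex.sub_re, ← Complex.ofReal_pow]
      rw [h1]
      have := (hεpos n).le
      nlinarith [sq_nonneg y]
    · exact intervalIntegrable_const
    · apply Eventually.of_forall
      intro y hy
      exact (Complex.continuous_exp.tendsto _).comp ((hcnI.mul_const ((y:ℂ) ^ 2)))
  have hsecond : Tendsto (fun n => Complex.exp (cn n) / (2 * cn n)) atTop
      (nhds (Complex.exp I / (2 * I))) := by
    apply Tendsto.div ((Complex.continuous_exp.tendsto _).comp hcnI)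
      (tendsto_const_nhds.mul hcnI) (by simp [Complex.ext_iff])
  have hthird : Tendsto (fun n => tailInt (cn n)) atTop (nhds (tailInt I)) := by
    apply MeasureTheory.tendsto_integral_of_dominated_convergence
      (bound := fun y : ℝ => (1:ℝ)/2 * y ^ (-2:ℝ))
    · intro n
      exact tail_meas (hcn0 n)
    · exact bound_integrable
    · intro n
      filter_upwards [ae_restrict_mem measurableSet_Ioi] with y hy
      exact tail_norm_le (c_props (εn n) (hεpos n).le).1 (c_props (εn n) (hεpos n).le).2 hy
    · filter_upwards [ae_restrict_mem measurableSet_Ioi] with y hy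
      have hy2 : ((y:ℂ)) ^ 2 ≠ 0 := by
        have : (y:ℝ) ≠ 0 := by have : (1:ℝ) < y := hy; linarith
        exact pow_ne_zero 2 (Complex.ofReal_ne_zero.mpr this)
      apply Tendsto.div
      · exact (Complex.continuous_exp.tendsto _).comp (hcnI.mul_const _)
      · exact (tendsto_const_nhds.mul hcnI).mul_const _
      · exact mul_ne_zero (mul_ne_zero two_ne_zero Complex.I_ne_zero) hy2
  have hRHS : Tendsto (fun n => (∫ y in (0:ℝ)..1, Complex.exp (cn n * y ^ 2))
      - Complex.exp (cn n) / (2 * cn n) + tailInt (cn n)) atTop (nhds fresnelL) :=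
    (hfirst.sub hsecond).add hthird
  have heq : ∀ n, ((π : ℂ) / ((εn n : ℂ) - I)) ^ (1/2 : ℂ) / 2
      = (∫ y in (0:ℝ)..1, Complex.exp (cn n * y ^ 2))
        - Complex.exp (cn n) / (2 * cn n) + tailInt (cn n) := fun n => gauss_eq (hεpos n)
  exact tendsto_nhds_unique (hRHS.congr (fun n => (heq n).symm)) hLHS

lemma piI_pow : ((π : ℂ) * I) ^ (1/2 : ℂ) = (Real.sqrt (2*π) / 2 : ℝ) * (1 + I) := by
  have hne : (π : ℂ) * I ≠ 0 := by
    simp [Complex.ext_iff, Real.pi_ne_zero]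
  rw [Complex.cpow_def_of_ne_zero hne]
  have hlog : Complex.log ((π : ℂ) * I) = (Real.log π : ℂ) + (π/2 : ℝ) * I := by
    rw [Complex.log]
    have habs : ‖(π : ℂ) * I‖ = π := by
      simp [Real.pi_pos.le, abs_of_pos Real.pi_pos]
    have harg : Complex.arg ((π : ℂ) * I) = π / 2 := by
      rw [Complex.arg_real_mul I Real.pi_pos, Complex.arg_I]
    rw [habs, harg]
  rw [hlog]
  have : ((Real.log π : ℂ) + (π/2 : ℝ) * I) * (1/2 : ℂ)
      = ((Real.log π / 2 : ℝ) : ℂ) + ((π/4 : ℝ) : ℂ) * I := by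
    push_cast; ring
  rw [this, Complex.exp_add]
  rw [← Complex.ofReal_exp, show Real.log π / 2 = Real.log (Real.sqrt π) by
    rw [Real.log_sqrt Real.pi_pos.le], Real.exp_log (Real.sqrt_pos.mpr Real.pi_pos)]
  rw [Complex.exp_mul_I, ← Complex.ofReal_cos, ← Complex.ofReal_sin,
    Real.cos_pi_div_four, Real.sin_pi_div_four]
  have h2 : Real.sqrt π * (Real.sqrt 2 / 2) = Real.sqrt (2*π) / 2 := by
    rw [Real.sqrt_mul (by norm_num : (0:ℝ) ≤ 2) π]
    ring
  apply Complex.ext <;>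
    simp [Complex.ofReal_mul, Complex.add_re, Complex.add_im, Complex.mul_re, Complex.mul_im] <;>
    ring

lemma cexp_tendsto : Tendsto (fun T : ℝ => ∫ y in (0:ℝ)..T, Complex.exp (I * y ^ 2)) atTop
    (nhds fresnelL) := by
  have h1 := tendsto_ibp (c := I) (by simp) (by simp)
  have h2 := (tendsto_const_nhds
    (x := ∫ y in (0:ℝ)..1, Complex.exp (I * y ^ 2)) (f := atTop (α := ℝ))).add h1
  rw [show (∫ y in (0:ℝ)..1, Complex.exp (I * y ^ 2)) + (-(Complex.exp I / (2 * I)) + tailInt I)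
    = fresnelL by rw [fresnelL]; ring] at h2
  apply h2.congr
  intro T
  exact intervalIntegral.integral_add_adjacent_intervals
    ((Complex.continuous_exp.comp (by fun_prop)).intervalIntegrable _ _)
    ((Complex.continuous_exp.comp (by fun_prop)).intervalIntegrable _ _)

lemma decomp (T : ℝ) : (∫ y in (0:ℝ)..T, Complex.exp (I * y ^ 2))
    = ((∫ y in (0:ℝ)..T, Real.cos (y ^ 2) : ℝ) : ℂ)
      + ((∫ y in (0:ℝ)..T, Real.sin (y ^ 2) : ℝ) : ℂ) * I := by
  have hpt : ∀ y : ℝ, Complex.exp (I * y ^ 2)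
      = ((Real.cos (y ^ 2) : ℝ) : ℂ) + ((Real.sin (y ^ 2) : ℝ) : ℂ) * I := by
    intro y
    rw [show Complex.I * (y:ℂ) ^ 2 = ((y ^ 2 : ℝ) : ℂ) * I by push_cast; ring,
      Complex.exp_mul_I, ← Complex.ofReal_cos, ← Complex.ofReal_sin]
  rw [intervalIntegral.integral_congr (g := fun y : ℝ =>
    ((Real.cos (y ^ 2) : ℝ) : ℂ) + ((Real.sin (y ^ 2) : ℝ) : ℂ) * I) (fun y _ => hpt y)]
  rw [intervalIntegral.integral_add
    ((by fun_prop : Continuous fun y : ℝ => ((Real.cos (y ^ 2) : ℝ) : ℂ)).intervalIntegrable _ _)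
    ((by fun_prop : Continuous fun y : ℝ => ((Real.sin (y ^ 2) : ℝ) : ℂ) * I).intervalIntegrable _ _)]
  rw [intervalIntegral.integral_mul_const, intervalIntegral.integral_ofReal,
    intervalIntegral.integral_ofReal]

lemma fresnel_cos : Tendsto (fun T : ℝ => ∫ y in (0:ℝ)..T, Real.cos (y ^ 2)) atTop
    (nhds (Real.sqrt (2*π) / 4)) := by
  have := (Complex.continuous_re.tendsto _).comp cexp_tendsto
  have hre : fresnelL.re = Real.sqrt (2*π) / 4 := by
    rw [fresnelL_eq, piI_pow]
    simp [Complex.div_re]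
    ring
  rw [hre] at this
  apply this.congr
  intro T
  simp [Function.comp, decomp T]

lemma fresnel_sin : Tendsto (fun T : ℝ => ∫ y in (0:ℝ)..T, Real.sin (y ^ 2)) atTop
    (nhds (Real.sqrt (2*π) / 4)) := by
  have := (Complex.continuous_im.tendsto _).comp cexp_tendsto
  have him : fresnelL.im = Real.sqrt (2*π) / 4 := by
    rw [fresnelL_eq, piI_pow]
    simp [Complex.div_im]
    ring
  rw [him] at this
  apply this.congr
  intro T
  simp [Function.comp, decomp T]

end FresnelDevelopment

section FinalAssembly

open Filter

noncomputable def fresnelG (T : ℝ) : ℝ :=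
  Real.sqrt ((Real.sqrt (2 * π) / 4 - ∫ y in (0 : ℝ)..T, Real.cos (y ^ 2)) ^ 2 +
    (Real.sqrt (2 * π) / 4 - ∫ y in (0 : ℝ)..T, Real.sin (y ^ 2)) ^ 2)

lemma fresnelG_tendsto : Tendsto fresnelG atTop (nhds 0) := by
  have ha : Tendsto (fun T : ℝ => Real.sqrt (2*π)/4 - ∫ y in (0:ℝ)..T, Real.cos (y ^ 2)) atTop
      (nhds 0) := by simpa using (tendsto_const_nhds (x := Real.sqrt (2*π)/4)).sub fresnel_cos
  have hb : Tendsto (fun T : ℝ => Real.sqrt (2*π)/4 - ∫ y in (0:ℝ)..T, Real.sin (y ^ 2)) atTop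
      (nhds 0) := by simpa using (tendsto_const_nhds (x := Real.sqrt (2*π)/4)).sub fresnel_sin
  have h := ((ha.pow 2).add (hb.pow 2)).sqrt
  rw [show (0:ℝ) = Real.sqrt (0 ^ 2 + 0 ^ 2) by norm_num]
  exact h

lemma sqrt_tendsto_atTop : Tendsto Real.sqrt atTop atTop := by
  refine tendsto_atTop.2 fun b => eventually_atTop.2 ⟨(max b 0) ^ 2, fun x hx => ?_⟩
  refine le_trans (le_max_left b 0) ?_
  rw [← Real.sqrt_sq (le_max_right b 0)]
  exact Real.sqrt_le_sqrt hx

end FinalAssembly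

/-- Geometrical-optics limit: away from the shadow boundaries (`sin φ̂ ≠ 0`, `c ≠ 0`),
each UTD diffraction term
`D(k) = −(ν/(2√(2πks))) · cot(φ̂) · F(2ks·c²)` tends to `0` as the wavenumber `k → ∞`. -/
theorem utd_term_tendsto_zero (ν s φhat c : ℝ) (hν : 0 < ν) (hs : 0 < s)
    (hsin : Real.sin φhat ≠ 0) (hc : c ≠ 0) :
    Filter.Tendsto
      (fun k : ℝ => -(ν / (2 * Real.sqrt (2 * π * k * s))) * Real.cot φhat *
        utdTransition (2 * k * s * c ^ 2))
      Filter.atTop (nhds 0) := by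
  have hu : Filter.Tendsto (fun k : ℝ => Real.sqrt (2 * k * s * c ^ 2)) Filter.atTop
      Filter.atTop := by
    apply sqrt_tendsto_atTop.comp
    have hpos : 0 < 2 * s * c ^ 2 := by positivity
    have := Filter.tendsto_id.const_mul_atTop hpos (f := fun k : ℝ => k) (l := Filter.atTop)
    apply this.congr
    intro k; ring
  have hcomp : Filter.Tendsto (fun k : ℝ => fresnelG (Real.sqrt (2 * k * s * c ^ 2)))
      Filter.atTop (nhds 0) := fresnelG_tendsto.comp hu
  have hfinal := (tendsto_const_nhds (x := -(ν * |c| / Real.sqrt π) * Real.cot φhat)).mul hcomp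
  rw [mul_zero] at hfinal
  apply hfinal.congr'
  filter_upwards [Filter.eventually_gt_atTop (0:ℝ)] with k hk
  have h2ks : (0:ℝ) < 2 * k * s := by positivity
  have hsqrt1 : Real.sqrt (2 * k * s * c ^ 2) = Real.sqrt (2 * k * s) * |c| := by
    rw [Real.sqrt_mul h2ks.le, Real.sqrt_sq_eq_abs]
  have hsqrt2 : Real.sqrt (2 * π * k * s) = Real.sqrt π * Real.sqrt (2 * k * s) := by
    rw [show 2 * π * k * s = π * (2 * k * s) by ring, Real.sqrt_mul Real.pi_pos.le]
  have hsq : Real.sqrt (2 * k * s) > 0 := Real.sqrt_pos.mpr h2ks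
  have hπ : Real.sqrt π > 0 := Real.sqrt_pos.mpr Real.pi_pos
  show -(ν * |c| / Real.sqrt π) * Real.cot φhat * fresnelG (Real.sqrt (2 * k * s * c ^ 2))
      = -(ν / (2 * Real.sqrt (2 * π * k * s))) * Real.cot φhat *
        utdTransition (2 * k * s * c ^ 2)
  rw [utdTransition]
  have hG : Real.sqrt ((Real.sqrt (2 * π) / 4
      - ∫ y in (0 : ℝ)..Real.sqrt (2 * k * s * c ^ 2), Real.cos (y ^ 2)) ^ 2 +
      (Real.sqrt (2 * π) / 4
      - ∫ y in (0 : ℝ)..Real.sqrt (2 * k * s * c ^ 2), Real.sin (y ^ 2)) ^ 2)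
      = fresnelG (Real.sqrt (2 * k * s * c ^ 2)) := rfl
  rw [hG, hsqrt1, hsqrt2]
  field_simp
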